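/- arXiv:1608.02197 — 2 statements merged into one kernel-verified Lean document; each statement's English description precedes it below -/
import Mathlib

section
/- Let x be a vertex of the hierarchical graph H_{n_1,…,n_k} with alt(x) ≥ 1. Then there exists a vertex y adjacent to x with alt(y) = alt(x) − 1, and every vertex y' adjacent to x satisfies alt(y') ≥ alt(x) − 1. -/
def extVal (n : ℕ → ℕ) (k : ℕ) (x : ∀ i : Fin k, Fin (n i)) (j : ℕ) : ℕ :=
  if h : j < k then (x ⟨j, h⟩).val else 0

def altNum (n : ℕ → ℕ) (k : ℕ) (x : ∀ i : Fin k, Fin (n i)) : ℕ :=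
  ((Finset.range k).filter (fun j =>
    (extVal n k x j = 0 ∧ extVal n k x (j + 1) ≠ 0) ∨
    (extVal n k x j ≠ 0 ∧ extVal n k x (j + 1) = 0))).card

def HierAdj (n : ℕ → ℕ) (k : ℕ) (x y : ∀ i : Fin k, Fin (n i)) : Prop :=
  x ≠ y ∧
    ((∀ i : Fin k, 0 < i.val → x i = y i) ∨
     (∃ j : Fin k,
       (((∀ i : Fin k, i.val ≤ j.val → (x i).val = 0) ∧
         (∀ i : Fin k, i.val ≤ j.val → (y i).val ≠ 0)) ∨
        ((∀ i : Fin k, i.val ≤ j.val → (y i).val = 0) ∧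
         (∀ i : Fin k, i.val ≤ j.val → (x i).val ≠ 0))) ∧
       (∀ i : Fin k, j.val < i.val → x i = y i)) ∨
     (∃ m : Fin k, 0 < m.val ∧
       (∀ i : Fin k, i.val < m.val → (x i).val = 0 ∧ (y i).val = 0) ∧
       (x m).val ≠ 0 ∧ (y m).val ≠ 0 ∧ x m ≠ y m ∧
       (∀ i : Fin k, m.val < i.val → x i = y i)))

def hierGraph (n : ℕ → ℕ) (k : ℕ) : SimpleGraph (∀ i : Fin k, Fin (n i)) where
  Adj := HierAdj n k
  symm := by
    constructor
    rintro x y ⟨hne, h⟩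
    refine ⟨hne.symm, ?_⟩
    rcases h with h | ⟨j, hj, hag⟩ | ⟨m, hm, hpre, hx, hy, hxy, hs⟩
    · exact Or.inl fun i hi => (h i hi).symm
    · exact Or.inr (Or.inl ⟨j, hj.symm, fun i hi => (hag i hi).symm⟩)
    · exact Or.inr (Or.inr ⟨m, hm, fun i hi => ⟨(hpre i hi).2, (hpre i hi).1⟩,
        hy, hx, hxy.symm, fun i hi => (hs i hi).symm⟩)
  loopless := ⟨fun x h => h.1 rfl⟩

lemma card_filter_le' {s : Finset ℕ} {p q : ℕ → Prop} [DecidablePred p] [DecidablePred q]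
    (t : ℕ) (h : ∀ j ∈ s, j ≠ t → (p j ↔ q j)) :
    (s.filter p).card ≤ (s.filter q).card + 1 := by
  calc (s.filter p).card ≤ (insert t (s.filter q)).card := by
        apply Finset.card_le_card
        intro j hj
        simp only [Finset.mem_filter] at hj
        by_cases hjt : j = t
        · simp [hjt]
        · exact Finset.mem_insert_of_mem (Finset.mem_filter.2 ⟨hj.1, (h j hj.1 hjt).1 hj.2⟩)
    _ ≤ _ := Finset.card_insert_le _ _

lemma card_filter_eq' {s : Finset ℕ} {p q : ℕ → Prop} [DecidablePred p] [DecidablePred q]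
    {t : ℕ} (hts : t ∈ s) (hpt : p t) (hqt : ¬ q t)
    (h : ∀ j ∈ s, j ≠ t → (p j ↔ q j)) :
    (s.filter p).card = (s.filter q).card + 1 := by
  have he : s.filter p = insert t (s.filter q) := by
    ext j
    simp only [Finset.mem_filter, Finset.mem_insert]
    constructor
    · rintro ⟨hjs, hpj⟩
      by_cases hjt : j = t
      · exact Or.inl hjt
      · exact Or.inr ⟨hjs, (h j hjs hjt).1 hpj⟩
    · rintro (rfl | ⟨hjs, hqj⟩)
      · exact ⟨hts, hpt⟩
      · exact ⟨hjs, (h j hjs (fun e => hqt (e ▸ hqj))).2 hqj⟩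
  rw [he, Finset.card_insert_of_notMem (by simp [hqt])]

lemma extVal_lt (n : ℕ → ℕ) (k : ℕ) (x : ∀ i : Fin k, Fin (n i)) {j : ℕ} (h : j < k) :
    extVal n k x j = (x ⟨j, h⟩).val := dif_pos h

lemma extVal_ge (n : ℕ → ℕ) (k : ℕ) (x : ∀ i : Fin k, Fin (n i)) {j : ℕ} (h : k ≤ j) :
    extVal n k x j = 0 := dif_neg (not_lt.2 h)

lemma extVal_congr (n : ℕ → ℕ) (k : ℕ) (x y : ∀ i : Fin k, Fin (n i)) (t : ℕ)
    (h : ∀ i : Fin k, t < i.val → x i = y i) :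
    ∀ j, t < j → extVal n k x j = extVal n k y j := by
  intro j hj
  by_cases hjk : j < k
  · rw [extVal_lt n k x hjk, extVal_lt n k y hjk, h ⟨j, hjk⟩ hj]
  · rw [extVal_ge n k x (le_of_not_gt hjk), extVal_ge n k y (le_of_not_gt hjk)]

lemma zeroIff_imp {a b c d : ℕ} (h1 : a = 0 ↔ c = 0) (h2 : b = 0 ↔ d = 0) :
    ((a = 0 ∧ b ≠ 0) ∨ (a ≠ 0 ∧ b = 0)) ↔ ((c = 0 ∧ d ≠ 0) ∨ (c ≠ 0 ∧ d = 0)) := by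
  tauto

lemma prefixFlip (n : ℕ → ℕ) (k : ℕ) (x y : ∀ i : Fin k, Fin (n i)) (t : ℕ) (htk : t < k)
    (hx0 : ∀ i : Fin k, i.val ≤ t → (x i).val = 0)
    (hy0 : ∀ i : Fin k, i.val ≤ t → (y i).val ≠ 0)
    (hag : ∀ i : Fin k, t < i.val → x i = y i) :
    ∀ j ∈ Finset.range k, j ≠ t →
      (((extVal n k x j = 0 ∧ extVal n k x (j+1) ≠ 0) ∨ (extVal n k x j ≠ 0 ∧ extVal n k x (j+1) = 0)) ↔
       ((extVal n k y j = 0 ∧ extVal n k y (j+1) ≠ 0) ∨ (extVal n k y j ≠ 0 ∧ extVal n k y (j+1) = 0))) := by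
  intro j hj hjt
  rw [Finset.mem_range] at hj
  rcases lt_or_gt_of_ne hjt with hlt | hgt
  · have hj1 : j + 1 ≤ t := hlt
    have e1 : extVal n k x j = 0 := by rw [extVal_lt n k x hj]; exact hx0 _ (le_of_lt hlt)
    have e2 : extVal n k x (j+1) = 0 := by
      rw [extVal_lt n k x (lt_of_le_of_lt hj1 htk)]; exact hx0 _ hj1
    have e3 : extVal n k y j ≠ 0 := by rw [extVal_lt n k y hj]; exact hy0 _ (le_of_lt hlt)
    have e4 : extVal n k y (j+1) ≠ 0 := by
      rw [extVal_lt n k y (lt_of_le_of_lt hj1 htk)]; exact hy0 _ hj1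
    simp [e1, e2, e3, e4]
  · rw [extVal_congr n k x y t hag j hgt, extVal_congr n k x y t hag (j+1) (by omega)]

/-- If `alt(x) ≥ 1` then some neighbour `y` of `x` has `alt(y) = alt(x) - 1`,
and no neighbour `y'` of `x` has `alt(y') < alt(x) - 1`. -/
theorem stmt_3 (n : ℕ → ℕ) (k : ℕ) (hk : 1 ≤ k) (hn : ∀ i < k, 2 ≤ n i)
    (x : ∀ i : Fin k, Fin (n i)) (hx : 1 ≤ altNum n k x) :
    (∃ y, (hierGraph n k).Adj x y ∧ altNum n k y + 1 = altNum n k x) ∧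
    (∀ y', (hierGraph n k).Adj x y' → altNum n k x ≤ altNum n k y' + 1) := by
  constructor
  · by_cases h0 : (x ⟨0, hk⟩).val = 0
    · -- x starts with zero: flip the maximal zero prefix to nonzero
      have hex : ∃ i, extVal n k x i ≠ 0 := by
        by_contra hall
        push_neg at hall
        have h0' : altNum n k x = 0 := by
          unfold altNum
          rw [Finset.card_eq_zero, Finset.filter_eq_empty_iff]
          intro i _
          simp [hall]
        omega
      set j := Nat.find hex with hjdef
      have hjne : extVal n k x j ≠ 0 := Nat.find_spec hex
      have hmin : ∀ i < j, extVal n k x i = 0 := fun i hi => not_not.1 (Nat.find_min hex hi)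
      have hjk : j < k := by
        by_contra hc
        exact hjne (extVal_ge n k x (le_of_not_gt hc))
      have hj1 : 1 ≤ j := by
        rcases Nat.eq_zero_or_pos j with h | h
        · exfalso; apply hjne; rw [h, extVal_lt n k x hk]; exact h0
        · exact h
      set y : ∀ i : Fin k, Fin (n i) :=
        fun i => if h2 : i.val < j then ⟨1, by have := hn i.val i.isLt; omega⟩ else x i with hy
      have hyv : ∀ i : Fin k, i.val < j → (y i).val = 1 := by
        intro i hi; simp [hy, hi]
      have hyx : ∀ i : Fin k, ¬ i.val < j → y i = x i := by
        intro i hi; simp [hy, hi]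
      have hxz : ∀ i : Fin k, i.val ≤ j - 1 → (x i).val = 0 := by
        intro i hi
        have h := hmin i.val (by omega)
        rw [extVal_lt n k x i.isLt] at h
        simpa using h
      have hynz : ∀ i : Fin k, i.val ≤ j - 1 → (y i).val ≠ 0 := by
        intro i hi
        have := hyv i (by omega); omega
      have hagr : ∀ i : Fin k, j - 1 < i.val → x i = y i := by
        intro i hi; exact (hyx i (by omega)).symm
      have hflip := prefixFlip n k x y (j - 1) (by omega) hxz hynz hagr
      have hEyx : extVal n k y j = extVal n k x j :=
        extVal_congr n k y x (j - 1) (fun i hi => hyx i (by omega)) j (by omega)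
      refine ⟨y, ⟨?_, Or.inr (Or.inl ⟨⟨j - 1, by omega⟩, Or.inl ⟨hxz, hynz⟩, hagr⟩)⟩, ?_⟩
      · intro hxy
        have h1 : (y ⟨0, hk⟩).val = 1 := hyv _ (by show 0 < j; omega)
        rw [hxy] at h0; omega
      · symm
        unfold altNum
        refine card_filter_eq' (Finset.mem_range.2 (by omega)) ?_ ?_ hflip
        · exact Or.inl ⟨hmin (j - 1) (by omega), by rw [show j - 1 + 1 = j by omega]; exact hjne⟩
        · intro hP
          have e1 : extVal n k y (j - 1) ≠ 0 := by
            rw [extVal_lt n k y (by omega : j - 1 < k)]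
            have := hyv ⟨j - 1, by omega⟩ (by show j - 1 < j; omega); omega
          have e2 : extVal n k y (j - 1 + 1) ≠ 0 := by
            rw [show j - 1 + 1 = j by omega, hEyx]; exact hjne
          rcases hP with ⟨h1, _⟩ | ⟨_, h2⟩
          · exact e1 h1
          · exact e2 h2
    · -- x starts with nonzero: zero out the maximal nonzero prefix
      have hex : ∃ i, extVal n k x i = 0 := ⟨k, extVal_ge n k x le_rfl⟩
      set j := Nat.find hex with hjdef
      have hjz : extVal n k x j = 0 := Nat.find_spec hex
      have hmin : ∀ i < j, extVal n k x i ≠ 0 := fun i hi => Nat.find_min hex hi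
      have hjk : j ≤ k := Nat.find_le (extVal_ge n k x le_rfl)
      have hj1 : 1 ≤ j := by
        rcases Nat.eq_zero_or_pos j with h | h
        · exfalso; apply h0
          have h2 := hjz
          rw [h, extVal_lt n k x hk] at h2
          exact h2
        · exact h
      set y : ∀ i : Fin k, Fin (n i) :=
        fun i => if h2 : i.val < j then ⟨0, by have := hn i.val i.isLt; omega⟩ else x i with hy
      have hyv : ∀ i : Fin k, i.val < j → (y i).val = 0 := by
        intro i hi; simp [hy, hi]
      have hyx : ∀ i : Fin k, ¬ i.val < j → y i = x i := by
        intro i hi; simp [hy, hi]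
      have hyz : ∀ i : Fin k, i.val ≤ j - 1 → (y i).val = 0 := fun i hi => hyv i (by omega)
      have hxnz : ∀ i : Fin k, i.val ≤ j - 1 → (x i).val ≠ 0 := by
        intro i hi
        have h := hmin i.val (by omega)
        rw [extVal_lt n k x i.isLt] at h
        simpa using h
      have hagr : ∀ i : Fin k, j - 1 < i.val → x i = y i := by
        intro i hi; exact (hyx i (by omega)).symm
      have hflip := prefixFlip n k y x (j - 1) (by omega) hyz hxnz (fun i hi => (hagr i hi).symm)
      have hEyx : extVal n k y j = extVal n k x j :=
        extVal_congr n k y x (j - 1) (fun i hi => hyx i (by omega)) j (by omega)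
      refine ⟨y, ⟨?_, Or.inr (Or.inl ⟨⟨j - 1, by omega⟩, Or.inr ⟨hyz, hxnz⟩, hagr⟩)⟩, ?_⟩
      · intro hxy
        have h1 : (y ⟨0, hk⟩).val = 0 := hyv _ (by show 0 < j; omega)
        rw [hxy] at h0; exact h0 h1
      · symm
        unfold altNum
        refine card_filter_eq' (Finset.mem_range.2 (by omega)) ?_ ?_
          (fun i hi hit => (hflip i hi hit).symm)
        · refine Or.inr ⟨hmin (j - 1) (by omega), ?_⟩
          rw [show j - 1 + 1 = j by omega]; exact hjz
        · intro hP
          have e1 : extVal n k y (j - 1) = 0 := by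
            rw [extVal_lt n k y (by omega : j - 1 < k)]
            exact hyv ⟨j - 1, by omega⟩ (by show j - 1 < j; omega)
          have e2 : extVal n k y (j - 1 + 1) = 0 := by
            rw [show j - 1 + 1 = j by omega, hEyx]; exact hjz
          rcases hP with ⟨_, h2⟩ | ⟨h1, _⟩
          · exact h2 e2
          · exact h1 e1
  · rintro y' ⟨hne, h | ⟨j, hj, hag⟩ | ⟨m, hm, hpre, hxm, hym, hxym, hs⟩⟩
    · -- A1
      unfold altNum
      apply card_filter_le' 0
      intro i hi hit
      rw [extVal_congr n k x y' 0 h i (Nat.pos_of_ne_zero hit),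
        extVal_congr n k x y' 0 h (i + 1) (by omega)]
    · -- A2
      unfold altNum
      apply card_filter_le' j.val
      rcases hj with ⟨hx0, hy0⟩ | ⟨hy0, hx0⟩
      · exact prefixFlip n k x y' j.val j.isLt hx0 hy0 hag
      · intro i hi hit
        exact (prefixFlip n k y' x j.val j.isLt hy0 hx0 (fun i hi => (hag i hi).symm) i hi hit).symm
    · -- A3
      unfold altNum
      apply card_filter_le' k
      have hiff : ∀ i, (extVal n k x i = 0 ↔ extVal n k y' i = 0) := by
        intro i
        by_cases hik : i < k
        · rcases lt_trichotomy i m.val with hlt | heq | hgt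
          · have h := hpre ⟨i, hik⟩ hlt
            rw [extVal_lt n k x hik, extVal_lt n k y' hik]
            simp [h.1, h.2]
          · have hm' : (⟨i, hik⟩ : Fin k) = m := Fin.ext heq
            rw [extVal_lt n k x hik, extVal_lt n k y' hik, hm']
            simp [hxm, hym]
          · rw [extVal_lt n k x hik, extVal_lt n k y' hik, hs ⟨i, hik⟩ hgt]
        · rw [extVal_ge n k x (le_of_not_gt hik), extVal_ge n k y' (le_of_not_gt hik)]
      intro i hi _
      exact zeroIff_imp (hiff i) (hiff (i + 1))
end

section
/- Let k ≥ 1 and n_1,…,n_k be integers with each n_i ≥ 2. In the hierarchical graph H_{n_1,…,n_k}, the eccentricity of the root r = 00…0 equals k. -/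
namespace HGAux

variable {n : ℕ → ℕ} {k : ℕ}

/-- The predicate counted in `altNum`. -/
def AP (n : ℕ → ℕ) (k : ℕ) (x : ∀ i : Fin k, Fin (n i)) (j : ℕ) : Prop :=
  (extVal n k x j = 0 ∧ extVal n k x (j + 1) ≠ 0) ∨
  (extVal n k x j ≠ 0 ∧ extVal n k x (j + 1) = 0)

/-- The set counted in `altNum`. -/
def altSet (n : ℕ → ℕ) (k : ℕ) (x : ∀ i : Fin k, Fin (n i)) : Finset ℕ :=
  (Finset.range k).filter (fun j =>
    (extVal n k x j = 0 ∧ extVal n k x (j + 1) ≠ 0) ∨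
    (extVal n k x j ≠ 0 ∧ extVal n k x (j + 1) = 0))

lemma altNum_def (x : ∀ i : Fin k, Fin (n i)) : altNum n k x = (altSet n k x).card := rfl

lemma mem_altSet {x : ∀ i : Fin k, Fin (n i)} {j : ℕ} :
    j ∈ altSet n k x ↔ j < k ∧ AP n k x j := by
  rw [altSet, Finset.mem_filter, Finset.mem_range]; exact Iff.rfl

lemma extVal_lt (x : ∀ i : Fin k, Fin (n i)) {j : ℕ} (h : j < k) :
    extVal n k x j = (x ⟨j, h⟩).val := dif_pos h

lemma extVal_ge (x : ∀ i : Fin k, Fin (n i)) {j : ℕ} (h : k ≤ j) :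
    extVal n k x j = 0 := dif_neg (by omega)

lemma extVal_fin (x : ∀ i : Fin k, Fin (n i)) (i : Fin k) :
    extVal n k x i.val = (x i).val := by
  rw [extVal_lt x i.isLt]

lemma altNum_le_k (x : ∀ i : Fin k, Fin (n i)) : altNum n k x ≤ k := by
  rw [altNum_def]
  exact (Finset.card_le_card (Finset.filter_subset _ _)).trans (by simp)

lemma AP_congr {x y : ∀ i : Fin k, Fin (n i)} {j : ℕ}
    (h1 : extVal n k x j = 0 ↔ extVal n k y j = 0)
    (h2 : extVal n k x (j + 1) = 0 ↔ extVal n k y (j + 1) = 0) :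
    AP n k x j ↔ AP n k y j := by
  unfold AP; tauto

lemma not_AP_of_eq {x : ∀ i : Fin k, Fin (n i)} {j : ℕ}
    (h : (extVal n k x j = 0) ↔ (extVal n k x (j + 1) = 0)) : ¬ AP n k x j := by
  unfold AP; tauto

lemma extVal_eq_of_agree {x y : ∀ i : Fin k, Fin (n i)} (j0 : ℕ)
    (hag : ∀ i : Fin k, j0 < i.val → x i = y i) {p : ℕ} (hp : j0 < p) :
    extVal n k x p = extVal n k y p := by
  by_cases h : p < k
  · rw [extVal_lt x h, extVal_lt y h, hag ⟨p, h⟩ hp]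
  · rw [extVal_ge x (by omega), extVal_ge y (by omega)]

/-- Along an edge, the predicates agree except possibly at one position. -/
lemma adj_AP (x y : ∀ i : Fin k, Fin (n i)) (h : HierAdj n k x y) :
    ∃ a : ℕ, ∀ j : ℕ, j ≠ a → (AP n k x j ↔ AP n k y j) := by
  obtain ⟨-, h | ⟨j, hj, hag⟩ | ⟨m, hm, hpre, hxm, hym, -, hs⟩⟩ := h
  · -- A1 : differ only at coordinate 0
    refine ⟨0, fun p hp => ?_⟩
    have key : ∀ q : ℕ, 0 < q → extVal n k x q = extVal n k y q := fun q hq =>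
      extVal_eq_of_agree 0 h hq
    exact AP_congr (by rw [key p (by omega)]) (by rw [key (p+1) (by omega)])
  · -- A2
    refine ⟨j.val, fun p hp => ?_⟩
    rcases lt_or_gt_of_ne hp with hlt | hgt
    · -- p < j : both predicates false
      have hzmono : ∀ (z : ∀ i : Fin k, Fin (n i)),
          (∀ i : Fin k, i.val ≤ j.val → ((z i).val = 0)) →
          (extVal n k z p = 0 ∧ extVal n k z (p+1) = 0) := by
        intro z hz
        have h1 : p < k := lt_trans hlt j.isLt
        have h2' : p + 1 < k := by have := j.isLt; omega
        rw [extVal_lt z h1, extVal_lt z h2']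
        exact ⟨hz ⟨p, h1⟩ (show p ≤ j.val by omega), hz ⟨p+1, h2'⟩ (show p + 1 ≤ j.val by omega)⟩
      have hnmono : ∀ (z : ∀ i : Fin k, Fin (n i)),
          (∀ i : Fin k, i.val ≤ j.val → ((z i).val ≠ 0)) →
          (extVal n k z p ≠ 0 ∧ extVal n k z (p+1) ≠ 0) := by
        intro z hz
        have h1 : p < k := lt_trans hlt j.isLt
        have h2' : p + 1 < k := by have := j.isLt; omega
        rw [extVal_lt z h1, extVal_lt z h2']
        exact ⟨hz ⟨p, h1⟩ (show p ≤ j.val by omega), hz ⟨p+1, h2'⟩ (show p + 1 ≤ j.val by omega)⟩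
      rcases hj with ⟨hxz, hyn⟩ | ⟨hyz, hxn⟩
      · have hx := hzmono x hxz
        have hy := hnmono y hyn
        exact iff_of_false (not_AP_of_eq (by rw [hx.1, hx.2])) 
          (not_AP_of_eq (by constructor <;> intro hh <;> [exact absurd hh hy.1; exact absurd hh hy.2]))
      · have hy := hzmono y hyz
        have hx := hnmono x hxn
        exact iff_of_false
          (not_AP_of_eq (by constructor <;> intro hh <;> [exact absurd hh hx.1; exact absurd hh hx.2]))
          (not_AP_of_eq (by rw [hy.1, hy.2]))
    · -- p > j : extVals agree at p and p+1
      exact AP_congr (by rw [extVal_eq_of_agree j.val hag hgt])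
        (by rw [extVal_eq_of_agree j.val hag (by omega)])
  · -- A3 : zero-pattern identical everywhere
    refine ⟨k, fun p _ => ?_⟩
    have key : ∀ q : ℕ, (extVal n k x q = 0 ↔ extVal n k y q = 0) := by
      intro q
      rcases lt_trichotomy q m.val with hq | hq | hq
      · have hqk : q < k := lt_trans hq m.isLt
        rw [extVal_lt x hqk, extVal_lt y hqk,
          (hpre ⟨q, hqk⟩ hq).1, (hpre ⟨q, hqk⟩ hq).2]
      · subst hq
        rw [extVal_fin, extVal_fin]
        exact iff_of_false hxm hym
      · rw [extVal_eq_of_agree m.val hs hq]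
    exact AP_congr (key p) (key (p+1))

lemma altNum_le_succ {x y : ∀ i : Fin k, Fin (n i)} (a : ℕ)
    (h : ∀ j : ℕ, j ≠ a → AP n k y j → AP n k x j) :
    altNum n k y ≤ altNum n k x + 1 := by
  rw [altNum_def, altNum_def]
  have hsub : altSet n k y ⊆ insert a (altSet n k x) := by
    intro j hj
    rw [mem_altSet] at hj
    by_cases hja : j = a
    · simp [hja]
    · exact Finset.mem_insert_of_mem (mem_altSet.2 ⟨hj.1, h j hja hj.2⟩)
  exact (Finset.card_le_card hsub).trans (Finset.card_insert_le _ _)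

lemma altNum_lt {x y : ∀ i : Fin k, Fin (n i)} (a : ℕ) (hak : a < k)
    (hax : AP n k x a) (hay : ¬ AP n k y a)
    (h : ∀ j : ℕ, j ≠ a → AP n k y j → AP n k x j) :
    altNum n k y < altNum n k x := by
  rw [altNum_def, altNum_def]
  apply Finset.card_lt_card
  constructor
  · intro j hj
    rw [mem_altSet] at hj ⊢
    by_cases hja : j = a
    · exact absurd (hja ▸ hj.2) hay
    · exact ⟨hj.1, h j hja hj.2⟩
  · intro hcon
    have : a ∈ altSet n k y := hcon (mem_altSet.2 ⟨hak, hax⟩)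
    exact hay (mem_altSet.1 this).2

/-- altNum changes by at most 1 along any edge. -/
lemma altNum_adj_le {x y : ∀ i : Fin k, Fin (n i)} (h : HierAdj n k x y) :
    altNum n k y ≤ altNum n k x + 1 := by
  obtain ⟨a, ha⟩ := adj_AP x y h
  exact altNum_le_succ a (fun j hj hy => (ha j hj).2 hy)

lemma walk_bound {u v : ∀ i : Fin k, Fin (n i)} (p : (hierGraph n k).Walk u v) :
    altNum n k v ≤ altNum n k u + p.length := by
  induction p with
  | nil => simp
  | cons h p ih =>
    rename_i a b c
    have hb : altNum n k b ≤ altNum n k a + 1 := altNum_adj_le h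
    simp only [SimpleGraph.Walk.length_cons]
    omega

/-- Key reduction: a vertex other than the root has a neighbour with smaller altNum. -/
lemma exists_adj_lt (hn : ∀ i < k, 2 ≤ n i) (x : ∀ i : Fin k, Fin (n i))
    (hx : ∃ i : Fin k, (x i).val ≠ 0) :
    ∃ y, HierAdj n k x y ∧ altNum n k y < altNum n k x := by
  obtain ⟨i0, hi0⟩ := hx
  have hk0 : 0 < k := i0.pos
  by_cases h0 : (x ⟨0, hk0⟩).val = 0
  · -- first coordinate zero: fill the zero prefix with ones
    have hex : ∃ p, extVal n k x p ≠ 0 := ⟨i0.val, by rwa [extVal_fin]⟩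
    set s := Nat.find hex with hs_def
    have hs0 : extVal n k x s ≠ 0 := Nat.find_spec hex
    have hmin : ∀ p, p < s → extVal n k x p = 0 := fun p hp =>
      of_not_not (Nat.find_min hex hp)
    have hsk : s < k := by
      by_contra hc
      exact hs0 (extVal_ge x (by omega))
    have hspos : 0 < s := by
      rcases Nat.eq_zero_or_pos s with h | h
      · exfalso; apply hs0; rw [h, extVal_lt x hk0]; exact h0
      · exact h
    refine ⟨fun i => if h : i.val < s then ⟨1, by have := hn i.val i.isLt; omega⟩ else x i,
      ?_, ?_⟩
    · constructor
      · intro he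
        have := congrFun he ⟨0, hk0⟩
        rw [dif_pos hspos] at this
        rw [this] at h0
        simp at h0
      · refine Or.inr (Or.inl ⟨⟨s - 1, by omega⟩, Or.inl ⟨?_, ?_⟩, ?_⟩)
        · intro i hi
          have hi' : i.val ≤ s - 1 := hi
          have := hmin i.val (by omega)
          rwa [extVal_fin] at this
        · intro i hi
          have hi' : i.val ≤ s - 1 := hi
          simp only [dif_pos (show i.val < s by omega)]
          omega
        · intro i hi
          have hi' : s - 1 < i.val := hi
          simp only [dif_neg (show ¬ i.val < s by omega)]
    · -- altNum decreases, exceptional index s - 1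
      have hyval : ∀ p, p < s → extVal n k
          (fun i => if h : i.val < s then (⟨1, by have := hn i.val i.isLt; omega⟩ : Fin (n i)) else x i) p = 1 := by
        intro p hp
        rw [extVal_lt _ (by omega)]
        simp [hp]
      have hyeq : ∀ p, s ≤ p → extVal n k
          (fun i => if h : i.val < s then (⟨1, by have := hn i.val i.isLt; omega⟩ : Fin (n i)) else x i) p = extVal n k x p := by
        intro p hp
        by_cases hpk : p < k
        · rw [extVal_lt _ hpk, extVal_lt x hpk]
          simp [show ¬ p < s by omega]
        · rw [extVal_ge _ (by omega), extVal_ge x (by omega)]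
      apply altNum_lt (s - 1) (by omega)
      · exact Or.inl ⟨hmin (s-1) (by omega), by rw [show s - 1 + 1 = s by omega]; exact hs0⟩
      · apply not_AP_of_eq
        rw [hyval (s-1) (by omega), show s - 1 + 1 = s by omega, hyeq s le_rfl]
        constructor <;> intro hh
        · exact absurd hh one_ne_zero
        · exact absurd hh hs0
      · intro p hp hAP
        rcases lt_or_gt_of_ne hp with hlt | hgt
        · exfalso
          apply not_AP_of_eq _ hAP
          rw [hyval p (by omega), hyval (p+1) (by omega)]
        · exact (AP_congr (by rw [hyeq p (by omega)]) (by rw [hyeq (p+1) (by omega)])).1 hAP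
  · -- first coordinate nonzero: zero out the maximal nonzero prefix
    have hex : ∃ p, extVal n k x (p + 1) = 0 :=
      ⟨k - 1, by rw [show k - 1 + 1 = k by omega]; exact extVal_ge x le_rfl⟩
    set j := Nat.find hex with hj_def
    have hj1 : extVal n k x (j + 1) = 0 := Nat.find_spec hex
    have hjk : j < k := by
      have : j ≤ k - 1 := Nat.find_min' hex (by rw [show k - 1 + 1 = k by omega]; exact extVal_ge x le_rfl)
      omega
    have hnonz : ∀ p, p ≤ j → extVal n k x p ≠ 0 := by
      intro p hp
      cases p with
      | zero => rw [extVal_lt x hk0]; exact h0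
      | succ q => exact Nat.find_min hex (by omega)
    refine ⟨fun i => if h : i.val ≤ j then ⟨0, by have := hn i.val i.isLt; omega⟩ else x i,
      ?_, ?_⟩
    · constructor
      · intro he
        have := congrFun he ⟨0, hk0⟩
        rw [dif_pos (Nat.zero_le j)] at this
        apply hnonz 0 (Nat.zero_le j)
        rw [extVal_lt x hk0, this]
      · refine Or.inr (Or.inl ⟨⟨j, hjk⟩, Or.inr ⟨?_, ?_⟩, ?_⟩)
        · intro i hi
          have hi' : i.val ≤ j := hi
          simp only [dif_pos hi']
        · intro i hi
          have hi' : i.val ≤ j := hi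
          have := hnonz i.val hi'
          rwa [extVal_fin] at this
        · intro i hi
          have hi' : j < i.val := hi
          simp only [dif_neg (show ¬ i.val ≤ j by omega)]
    · have hyval : ∀ p, p ≤ j → extVal n k
          (fun i => if h : i.val ≤ j then (⟨0, by have := hn i.val i.isLt; omega⟩ : Fin (n i)) else x i) p = 0 := by
        intro p hp
        rw [extVal_lt _ (by omega)]
        simp [hp]
      have hyeq : ∀ p, j < p → extVal n k
          (fun i => if h : i.val ≤ j then (⟨0, by have := hn i.val i.isLt; omega⟩ : Fin (n i)) else x i) p = extVal n k x p := by
        intro p hp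
        by_cases hpk : p < k
        · rw [extVal_lt _ hpk, extVal_lt x hpk]
          simp [show ¬ p ≤ j by omega]
        · rw [extVal_ge _ (by omega), extVal_ge x (by omega)]
      apply altNum_lt j hjk
      · exact Or.inr ⟨hnonz j le_rfl, hj1⟩
      · apply not_AP_of_eq
        rw [hyval j le_rfl, hyeq (j+1) (by omega), hj1]
      · intro p hp hAP
        rcases lt_or_gt_of_ne hp with hlt | hgt
        · exfalso
          apply not_AP_of_eq _ hAP
          rw [hyval p (by omega), hyval (p+1) (by omega)]
        · exact (AP_congr (by rw [hyeq p (by omega)]) (by rw [hyeq (p+1) (by omega)])).1 hAP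

lemma exists_walk (hn : ∀ i < k, 2 ≤ n i) (r : ∀ i : Fin k, Fin (n i))
    (hr : ∀ i, (r i).val = 0) :
    ∀ t (x : ∀ i : Fin k, Fin (n i)), altNum n k x ≤ t →
      ∃ p : (hierGraph n k).Walk r x, p.length ≤ t := by
  intro t
  induction t with
  | zero =>
    intro x hx
    by_cases h0 : ∀ i, (x i).val = 0
    · have : x = r := funext fun i => Fin.ext (by rw [h0 i, hr i])
      subst this
      exact ⟨SimpleGraph.Walk.nil, by simp⟩
    · push_neg at h0
      obtain ⟨y, -, hlt⟩ := exists_adj_lt hn x h0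
      omega
  | succ t ih =>
    intro x hx
    by_cases h0 : ∀ i, (x i).val = 0
    · have : x = r := funext fun i => Fin.ext (by rw [h0 i, hr i])
      subst this
      exact ⟨SimpleGraph.Walk.nil, by simp⟩
    · push_neg at h0
      obtain ⟨y, hadj, hlt⟩ := exists_adj_lt hn x h0
      obtain ⟨p, hp⟩ := ih y (by omega)
      have hadj' : (hierGraph n k).Adj y x := SimpleGraph.Adj.symm (G := hierGraph n k) hadj
      exact ⟨p.concat hadj', by rw [SimpleGraph.Walk.length_concat]; omega⟩

lemma altNum_root (r : ∀ i : Fin k, Fin (n i)) (hr : ∀ i, (r i).val = 0) :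
    altNum n k r = 0 := by
  rw [altNum_def, Finset.card_eq_zero]
  ext j
  simp only [Finset.notMem_empty, iff_false]
  intro hj
  rw [mem_altSet] at hj
  have hz : ∀ p, extVal n k r p = 0 := by
    intro p
    by_cases hpk : p < k
    · rw [extVal_lt r hpk]; exact hr _
    · exact extVal_ge r (by omega)
  rcases hj.2 with ⟨-, h⟩ | ⟨h, -⟩
  · exact h (hz _)
  · exact h (hz _)

lemma dist_eq_altNum (hn : ∀ i < k, 2 ≤ n i) (r : ∀ i : Fin k, Fin (n i))
    (hr : ∀ i, (r i).val = 0) (x : ∀ i : Fin k, Fin (n i)) :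
    (hierGraph n k).dist r x = altNum n k x := by
  obtain ⟨p, hp⟩ := exists_walk hn r hr (altNum n k x) x le_rfl
  apply le_antisymm
  · exact (SimpleGraph.dist_le p).trans hp
  · obtain ⟨q, hq⟩ := SimpleGraph.Reachable.exists_walk_length_eq_dist ⟨p⟩
    have := walk_bound q
    rw [altNum_root r hr, hq] at this
    omega

end HGAux

/-- The eccentricity of the root `r = 00…0` of `H_{n_1,…,n_k}` equals `k`. -/
theorem stmt_12 (n : ℕ → ℕ) (k : ℕ) (hk : 1 ≤ k) (hn : ∀ i < k, 2 ≤ n i)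
    (r : ∀ i : Fin k, Fin (n i)) (hr : ∀ i, (r i).val = 0) :
    (Finset.univ.sup fun y : ∀ i : Fin k, Fin (n i) => (hierGraph n k).dist r y) = k := by
  classical
  apply le_antisymm
  · apply Finset.sup_le
    intro y _
    rw [HGAux.dist_eq_altNum hn r hr]
    exact HGAux.altNum_le_k y
  · have hx : altNum n k (fun i : Fin k => (⟨(k - i.val) % 2, by have := hn i.val i.isLt; omega⟩ : Fin (n i))) = k := by
      rw [HGAux.altNum_def, HGAux.altSet, Finset.filter_true_of_mem, Finset.card_range]
      intro j hj
      rw [Finset.mem_range] at hj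
      have h1 : extVal n k (fun i : Fin k => (⟨(k - i.val) % 2, by have := hn i.val i.isLt; omega⟩ : Fin (n i))) j = (k - j) % 2 := by
        rw [HGAux.extVal_lt _ hj]
      have h2 : extVal n k (fun i : Fin k => (⟨(k - i.val) % 2, by have := hn i.val i.isLt; omega⟩ : Fin (n i))) (j+1) = (k - (j+1)) % 2 := by
        by_cases hk1 : j + 1 < k
        · rw [HGAux.extVal_lt _ hk1]
        · rw [HGAux.extVal_ge _ (by omega)]
          omega
      rw [h1, h2]
      omega
    have hd : (hierGraph n k).dist r (fun i : Fin k => (⟨(k - i.val) % 2, by have := hn i.val i.isLt; omega⟩ : Fin (n i))) = k := by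
      rw [HGAux.dist_eq_altNum hn r hr, hx]
    exact le_of_eq_of_le hd.symm (Finset.le_sup (Finset.mem_univ _))
end
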